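/- Let x₁ < x₄ be real numbers and S₀₀ a finite nonempty set of points x ∈ [x₁, x₄) with positive idle times I(x) such that [x₁, x₄] = ⋂_{x ∈ S₀₀} [x − I(x)/2, x + I(x)/2]. If x₂ = min S₀₀, then x₂ − x₁ ≤ x₄ − x₂, i.e., x₂ ≤ (x₁ + x₄)/2. -/

import Mathlib

theorem stmt11 (x₁ x₄ : ℝ) (h14 : x₁ < x₄) (S : Finset ℝ) (hS : S.Nonempty)
    (I : ℝ → ℝ) (hIpos : ∀ x ∈ S, 0 < I x)
    (hSsub : ∀ x ∈ S, x ∈ Set.Ico x₁ x₄)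
    (hinter : Set.Icc x₁ x₄ = ⋂ x ∈ S, Set.Icc (x - I x / 2) (x + I x / 2)) :
    S.min' hS - x₁ ≤ x₄ - S.min' hS := by
  have hmem : ∀ z ∈ Set.Icc x₁ x₄, ∀ x ∈ S, z ∈ Set.Icc (x - I x / 2) (x + I x / 2) := by
    intro z hz x hx
    have := hinter ▸ hz
    exact Set.mem_iInter₂.1 this x hx
  obtain ⟨y, hyS, hymin⟩ := S.exists_min_image (fun x => x + I x / 2) hS
  -- y's right endpoint is at most x₄
  have hupper : y + I y / 2 ≤ x₄ := by
    by_contra hcon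
    push_neg at hcon
    obtain ⟨ε, hε⟩ : ∃ ε, ε = y + I y / 2 - x₄ := ⟨_, rfl⟩
    have hεpos : 0 < ε := by rw [hε]; linarith
    have hnot : x₄ + ε ∉ Set.Icc x₁ x₄ := by
      simp only [Set.mem_Icc, not_and, not_le]
      intro _; linarith
    rw [hinter] at hnot
    rw [Set.mem_iInter₂] at hnot
    push_neg at hnot
    obtain ⟨x, hxS, hxnot⟩ := hnot
    have hleft : x - I x / 2 ≤ x₁ := (hmem x₁ (Set.left_mem_Icc.2 h14.le) x hxS).1
    have : x + I x / 2 < x₄ + ε := by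
      simp only [Set.mem_Icc, not_and, not_le] at hxnot
      by_contra h
      push_neg at h
      exact absurd (hxnot (by linarith)) (not_lt.2 h)
    have := hymin x hxS
    linarith
  have h4 : x₄ ≤ y + I y / 2 := (hmem x₄ (Set.right_mem_Icc.2 h14.le) y hyS).2
  have h1 : y - I y / 2 ≤ x₁ := (hmem x₁ (Set.left_mem_Icc.2 h14.le) y hyS).1
  have hmin : S.min' hS ≤ y := S.min'_le y hyS
  linarith
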